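/- Let H and H_l be Hermitian operators on a finite-dimensional complex Hilbert space with ‖H_l‖ ≤ JM for reals J > 0, M > 0, let λ > 0 and set α = eJ, let Δ' ≥ Λ' ≥ Λ be reals, and let H̄_l = Π_{≤Δ'} H_l Π_{≤Δ'}. Assume the leakage bound: for every s' ∈ ℝ, ‖Π_{>Δ'} e^{−i s' H_l} Π_{≤Λ}‖ ≤ e^{−λ(Δ' − Λ)} (e^{αM|s'|} − 1). Then for every s ∈ ℝ, ‖Π_{≤Λ'} (e^{−i s H̄_l} − e^{−i s H_l}) Π_{≤Λ}‖ ≤ e^{−λ(Δ' − Λ)} (e^{αM|s|} − 1 − αM|s|). -/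

import Mathlib

noncomputable section

/-- Orthogonal projection onto the span of eigenvectors of `H` with eigenvalue at most `Λ`. -/
def projLE {E : Type*} [NormedAddCommGroup E] [InnerProductSpace ℂ E] [FiniteDimensional ℂ E]
    (H : E →L[ℂ] E) (Λ : ℝ) : E →L[ℂ] E :=
  (Submodule.subtypeL _).comp (Submodule.orthogonalProjectionOnto
    (⨆ μ ∈ Set.Iic Λ, Module.End.eigenspace (H : E →ₗ[ℂ] E) (μ : ℂ)))

/-- Orthogonal projection onto eigenvalues greater than `Λ`. -/
def projGT {E : Type*} [NormedAddCommGroup E] [InnerProductSpace ℂ E] [FiniteDimensional ℂ E]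
    (H : E →L[ℂ] E) (Λ : ℝ) : E →L[ℂ] E :=
  1 - projLE H Λ

/-- The unitary evolution `e^{-i s H}`. -/
def uexp {E : Type*} [NormedAddCommGroup E] [InnerProductSpace ℂ E] [FiniteDimensional ℂ E]
    (H : E →L[ℂ] E) (s : ℝ) : E →L[ℂ] E :=
  NormedSpace.exp ((-(Complex.I * (s : ℂ))) • H)

open NormedSpace

section Aux

variable {E : Type*} [NormedAddCommGroup E] [InnerProductSpace ℂ E] [FiniteDimensional ℂ E]

lemma projLE_sa (H : E →L[ℂ] E) (Λ : ℝ) : IsSelfAdjoint (projLE H Λ) :=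
  isSelfAdjoint_starProjection _

lemma projLE_norm_le (H : E →L[ℂ] E) (Λ : ℝ) : ‖projLE H Λ‖ ≤ 1 := by
  refine (ContinuousLinearMap.opNorm_comp_le _ _).trans ?_
  have h1 : ‖(Submodule.subtypeL (⨆ μ ∈ Set.Iic Λ, Module.End.eigenspace (H : E →ₗ[ℂ] E) (μ : ℂ)))‖ ≤ 1 :=
    ContinuousLinearMap.opNorm_le_bound _ zero_le_one (by simp)
  have h2 := Submodule.orthogonalProjectionOnto_norm_le (⨆ μ ∈ Set.Iic Λ, Module.End.eigenspace (H : E →ₗ[ℂ] E) (μ : ℂ))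
  nlinarith [norm_nonneg (Submodule.orthogonalProjectionOnto (⨆ μ ∈ Set.Iic Λ, Module.End.eigenspace (H : E →ₗ[ℂ] E) (μ : ℂ)))]

lemma projLE_mem (H : E →L[ℂ] E) (Λ : ℝ) (x : E) :
    projLE H Λ x ∈ (⨆ μ ∈ Set.Iic Λ, Module.End.eigenspace (H : E →ₗ[ℂ] E) (μ : ℂ)) := by
  simp [projLE]

lemma projLE_eq_self (H : E →L[ℂ] E) (Λ : ℝ) {x : E}
    (hx : x ∈ (⨆ μ ∈ Set.Iic Λ, Module.End.eigenspace (H : E →ₗ[ℂ] E) (μ : ℂ))) :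
    projLE H Λ x = x := by
  exact Submodule.starProjection_eq_self_iff.mpr hx

lemma projLE_comp_le (H : E →L[ℂ] E) {Λ Λ' : ℝ} (h : Λ ≤ Λ') :
    projLE H Λ' * projLE H Λ = projLE H Λ := by
  ext x
  have hsub : (⨆ μ ∈ Set.Iic Λ, Module.End.eigenspace (H : E →ₗ[ℂ] E) (μ : ℂ)) ≤
      (⨆ μ ∈ Set.Iic Λ', Module.End.eigenspace (H : E →ₗ[ℂ] E) (μ : ℂ)) :=
    biSup_mono (Set.Iic_subset_Iic.mpr h)
  exact projLE_eq_self H Λ' (hsub (projLE_mem H Λ x))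

lemma projLE_idem (H : E →L[ℂ] E) (Λ : ℝ) : projLE H Λ * projLE H Λ = projLE H Λ :=
  projLE_comp_le H le_rfl

lemma projLE_comp_le' (H : E →L[ℂ] E) {Λ Λ' : ℝ} (h : Λ ≤ Λ') :
    projLE H Λ * projLE H Λ' = projLE H Λ := by
  have := congrArg star (projLE_comp_le H h)
  rwa [star_mul, (projLE_sa H Λ).star_eq, (projLE_sa H Λ').star_eq] at this

lemma smul_neg_I (t : ℝ) (X : E →L[ℂ] E) : t • ((-Complex.I) • X) = (-(Complex.I * (t:ℂ))) • X := by
  rw [RCLike.real_smul_eq_coe_smul (K := ℂ), smul_smul]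
  congr 1
  rw [mul_comm, neg_mul]; norm_cast

set_option maxHeartbeats 1000000 in
lemma norm_exp_le (X : E →L[ℂ] E) (hX : IsSelfAdjoint X) (t : ℝ) :
    ‖exp (t • ((-Complex.I) • X))‖ ≤ 1 := by
  rcases subsingleton_or_nontrivial E with hE | hE
  · haveI : Subsingleton (E →L[ℂ] E) := inferInstance
    rw [Subsingleton.elim (exp (t • ((-Complex.I) • X))) 0, norm_zero]
    exact zero_le_one
  · have hnt : Nontrivial (E →L[ℂ] E) := ⟨1, 0, one_ne_zero⟩
    have hsa : IsSelfAdjoint ((((-t : ℝ)) : ℂ) • X) := by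
      rw [IsSelfAdjoint, star_smul, hX.star_eq, Complex.star_def, Complex.conj_ofReal]
    have heq : t • ((-Complex.I) • X) = Complex.I • (((((-t : ℝ)) : ℂ) • X : E →L[ℂ] E)) := by
      rw [smul_neg_I, smul_smul]
      congr 1
      push_cast
      ring
    have h1 := CStarRing.norm_coe_unitary (selfAdjoint.expUnitary (⟨(((-t : ℝ)) : ℂ) • X, hsa⟩ : selfAdjoint (E →L[ℂ] E)))
    rw [selfAdjoint.expUnitary_coe] at h1
    rw [heq]
    exact le_of_eq h1

lemma abs_integral_exp_abs (κ : ℝ) (hκ : 0 < κ) (s : ℝ) :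
    |∫ t in (0:ℝ)..s, (Real.exp (κ * |t|) - 1)| = (Real.exp (κ * |s|) - 1) / κ - |s| := by
  have hκ' : κ ≠ 0 := ne_of_gt hκ
  have hval : ∀ r : ℝ, 0 ≤ r → r ≤ (Real.exp (κ * r) - 1) / κ := by
    intro r hr
    rw [le_div_iff₀ hκ]
    nlinarith [Real.add_one_le_exp (κ * r)]
  rcases le_or_gt 0 s with hs | hs
  · have hcongr : (∫ t in (0:ℝ)..s, (Real.exp (κ * |t|) - 1)) =
        ∫ t in (0:ℝ)..s, (Real.exp (κ * t) - 1) := by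
      apply intervalIntegral.integral_congr
      intro t ht
      rw [Set.uIcc_of_le hs] at ht
      simp [abs_of_nonneg ht.1]
    have hG : ∀ t : ℝ, HasDerivAt (fun t : ℝ => Real.exp (κ * t) / κ - t) (Real.exp (κ * t) - 1) t := by
      intro t
      have h1 : HasDerivAt (fun t : ℝ => Real.exp (κ * t)) (Real.exp (κ * t) * κ) t := by
        simpa using ((hasDerivAt_id t).const_mul κ).exp
      have h2 := (h1.div_const κ).sub (hasDerivAt_id t)
      have h3 : Real.exp (κ * t) * κ / κ - 1 = Real.exp (κ * t) - 1 := by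
        rw [mul_div_assoc, div_self hκ', mul_one]
      rw [h3] at h2
      exact h2
    have hftc := intervalIntegral.integral_eq_sub_of_hasDerivAt (fun t (_ : t ∈ Set.uIcc 0 s) => hG t)
        (((Real.continuous_exp.comp (continuous_const.mul continuous_id)).sub continuous_const).intervalIntegrable 0 s)
    have hres : (Real.exp (κ * s) / κ - s) - (Real.exp (κ * 0) / κ - 0) = (Real.exp (κ * s) - 1) / κ - s := by
      rw [mul_zero, Real.exp_zero, sub_div]
      ring
    rw [abs_of_nonneg hs, hcongr, hftc, hres, abs_of_nonneg (by linarith [hval s hs])]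
  · have hcongr : (∫ t in s..(0:ℝ), (Real.exp (κ * |t|) - 1)) =
        ∫ t in s..(0:ℝ), (Real.exp (κ * (-t)) - 1) := by
      apply intervalIntegral.integral_congr
      intro t ht
      rw [Set.uIcc_of_le hs.le] at ht
      simp [abs_of_nonpos ht.2]
    have hG : ∀ t : ℝ, HasDerivAt (fun t : ℝ => -(Real.exp (κ * (-t)) / κ) - t) (Real.exp (κ * (-t)) - 1) t := by
      intro t
      have h1 : HasDerivAt (fun t : ℝ => Real.exp (κ * (-t))) (Real.exp (κ * (-t)) * (κ * (-1))) t := by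
        simpa using ((hasDerivAt_id t).neg.const_mul κ).exp
      have h2 := (h1.div_const κ).neg.sub (hasDerivAt_id t)
      have h3 : -(Real.exp (κ * (-t)) * (κ * (-1)) / κ) - 1 = Real.exp (κ * (-t)) - 1 := by
        rw [mul_neg_one, mul_neg, neg_div, neg_neg, mul_div_assoc, div_self hκ', mul_one]
      rw [h3] at h2
      exact h2
    have hftc := intervalIntegral.integral_eq_sub_of_hasDerivAt (fun t (_ : t ∈ Set.uIcc s 0) => hG t)
        (((Real.continuous_exp.comp (continuous_const.mul continuous_id.neg)).sub continuous_const).intervalIntegrable s 0)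
    have hres : (-(Real.exp (κ * (-(0:ℝ))) / κ) - 0) - (-(Real.exp (κ * (-s)) / κ) - s) =
        (Real.exp (κ * (-s)) - 1) / κ - (-s) := by
      rw [neg_zero, mul_zero, Real.exp_zero, sub_div]
      ring
    rw [abs_of_neg hs, intervalIntegral.integral_symm, hcongr, hftc, hres, abs_neg,
      abs_of_nonneg (by linarith [hval (-s) (by linarith)])]

end Aux

set_option maxHeartbeats 4000000 in
/-- Eq. (lemma3.1) inside the proof of Lemma 2: assuming the leakage bound
for the evolution under `H_l` past `Δ'`, the effective and true evolutions agree on the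
low-energy block up to `e^{−λ(Δ'−Λ)} (e^{αM|s|} − 1 − αM|s|)`, where `α = eJ`. -/
theorem effective_vs_true_evolution_refined
    {E : Type*} [NormedAddCommGroup E] [InnerProductSpace ℂ E] [FiniteDimensional ℂ E]
    (H Hl : E →L[ℂ] E) (hH : IsSelfAdjoint H) (hHl : IsSelfAdjoint Hl)
    (J M lam : ℝ) (hJ : 0 < J) (hM : 0 < M) (hnorm : ‖Hl‖ ≤ J * M) (hlam : 0 < lam)
    (Λ Λ' Δ' : ℝ) (hΛΛ' : Λ ≤ Λ') (hΛ'Δ' : Λ' ≤ Δ')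
    (hleak : ∀ s' : ℝ,
      ‖(projGT H Δ').comp ((uexp Hl s').comp (projLE H Λ))‖ ≤
        Real.exp (-lam * (Δ' - Λ)) * (Real.exp (Real.exp 1 * J * M * |s'|) - 1))
    (s : ℝ) :
    ‖(projLE H Λ').comp
        ((uexp ((projLE H Δ').comp (Hl.comp (projLE H Δ'))) s - uexp Hl s).comp
          (projLE H Λ))‖ ≤
      Real.exp (-lam * (Δ' - Λ)) *
        (Real.exp (Real.exp 1 * J * M * |s|) - 1 - Real.exp 1 * J * M * |s|) := by
  classical
  set κ : ℝ := Real.exp 1 * J * M with hκdef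
  have hexp1 : (1:ℝ) ≤ Real.exp 1 := by nlinarith [Real.add_one_le_exp (1:ℝ)]
  have hκ : 0 < κ := by positivity
  set c : ℝ := Real.exp (-lam * (Δ' - Λ)) with hcdef
  have hc : 0 < c := Real.exp_pos _
  set P : E →L[ℂ] E := projLE H Δ' with hPdef
  set Pi1 : E →L[ℂ] E := projLE H Λ with hPi1def
  set Pi2 : E →L[ℂ] E := projLE H Λ' with hPi2def
  set Hb : E →L[ℂ] E := (projLE H Δ').comp (Hl.comp (projLE H Δ')) with hHbdef
  have hHbmul : Hb = P * (Hl * P) := rfl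
  have hPidem : P * P = P := projLE_idem H Δ'
  have hPsa : IsSelfAdjoint P := projLE_sa H Δ'
  have hHbsa : IsSelfAdjoint Hb := by
    rw [hHbmul, IsSelfAdjoint, star_mul, star_mul, hPsa.star_eq, hHl.star_eq, mul_assoc]
  set B : E →L[ℂ] E := (-Complex.I) • Hb with hBdef
  set C : E →L[ℂ] E := (-Complex.I) • Hl with hCdef
  have huB : ∀ τ : ℝ, uexp Hb τ = exp (τ • B) := by
    intro τ
    rw [hBdef, smul_neg_I]
    rfl
  have huC : ∀ τ : ℝ, uexp Hl τ = exp (τ • C) := by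
    intro τ
    rw [hCdef, smul_neg_I]
    rfl
  -- commutation of P with exp((s-t)•B)
  have hPHb : Commute P Hb := by
    rw [hHbmul]
    show P * (P * (Hl * P)) = (P * (Hl * P)) * P
    rw [← mul_assoc, hPidem, mul_assoc, mul_assoc, hPidem]
  have hPe : ∀ τ : ℝ, Commute P (exp (τ • B)) := by
    intro τ
    exact (((hPHb.smul_right (-Complex.I)).smul_right τ)).exp_right
  -- derivative of the interpolation
  have hderivB : ∀ t : ℝ, HasDerivAt (fun u : ℝ => exp (u • B)) (exp (t • B) * B) t := by
    intro t
    exact hasDerivAt_exp_smul_const (𝕂 := ℝ) B t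
  have hderivC : ∀ t : ℝ, HasDerivAt (fun u : ℝ => exp (u • C)) (exp (t • C) * C) t := by
    intro t
    exact hasDerivAt_exp_smul_const (𝕂 := ℝ) C t
  have hderiv : ∀ t : ℝ, HasDerivAt (fun t : ℝ => exp ((s - t) • B) * exp (t • C))
      (exp ((s - t) • B) * ((C - B) * exp (t • C))) t := by
    intro t
    have h2 : HasDerivAt (fun t : ℝ => s - t) (-1 : ℝ) t := by
      simpa using (hasDerivAt_id t).const_sub s
    have hB1 : HasDerivAt (fun t : ℝ => exp ((s - t) • B))
        ((-1 : ℝ) • (exp ((s - t) • B) * B)) t :=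
      (hderivB (s - t)).scomp t h2
    have hmul := hB1.mul (hderivC t)
    refine hmul.congr_deriv ?_
    have hCe : exp (t • C) * C = C * exp (t • C) :=
      ((((Commute.refl C).smul_left t)).exp_left).eq
    rw [neg_one_smul, hCe]
    noncomm_ring
  -- continuity
  have hcont1 : Continuous fun t : ℝ => exp ((s - t) • B) :=
    (continuous_iff_continuousAt.2 fun u => (hderivB u).continuousAt).comp
      (continuous_const.sub continuous_id)
  have hcont2 : Continuous fun t : ℝ => exp (t • C) :=
    continuous_iff_continuousAt.2 fun t => (hderivC t).continuousAt
  have hcontD : Continuous fun t : ℝ => exp ((s - t) • B) * ((C - B) * exp (t • C)) :=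
    hcont1.mul (continuous_const.mul hcont2)
  -- fundamental theorem of calculus
  have hFTC := intervalIntegral.integral_eq_sub_of_hasDerivAt
      (fun t (_ : t ∈ Set.uIcc 0 s) => hderiv t) (hcontD.intervalIntegrable 0 s)
  have hFs : (∫ t in (0:ℝ)..s, exp ((s - t) • B) * ((C - B) * exp (t • C))) =
      uexp Hl s - uexp Hb s := by
    rw [hFTC, sub_self, zero_smul, exp_zero, one_mul, sub_zero, zero_smul, exp_zero, mul_one,
      huB, huC]
  -- the bilateral multiplication operator
  set L : (E →L[ℂ] E) →L[ℂ] (E →L[ℂ] E) :=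
    (ContinuousLinearMap.mul ℂ (E →L[ℂ] E) Pi2).comp
      ((ContinuousLinearMap.mul ℂ (E →L[ℂ] E)).flip Pi1) with hLdef
  have hL : ∀ X : E →L[ℂ] E, L X = Pi2 * (X * Pi1) := by
    intro X
    simp [hLdef]
  have hIop := L.intervalIntegral_comp_comm (μ := MeasureTheory.volume) (hcontD.intervalIntegrable 0 s)
  -- identify the goal operator
  have hgoal : (projLE H Λ').comp
      ((uexp ((projLE H Δ').comp (Hl.comp (projLE H Δ'))) s - uexp Hl s).comp (projLE H Λ)) =
      - ∫ t in (0:ℝ)..s, L (exp ((s - t) • B) * ((C - B) * exp (t • C))) := by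
    rw [hIop, hFs]
    have h1 : uexp Hl s - uexp Hb s = -(uexp Hb s - uexp Hl s) := (neg_sub _ _).symm
    rw [h1, map_neg, neg_neg, hL]
    rfl
  -- pointwise algebraic identity
  have hW : ∀ t : ℝ, (Pi2 * exp ((s - t) • B)) * P = Pi2 * exp ((s - t) • B) := by
    intro t
    have h1 : Pi2 * P = Pi2 := projLE_comp_le' H hΛ'Δ'
    calc (Pi2 * exp ((s - t) • B)) * P = Pi2 * (exp ((s - t) • B) * P) := mul_assoc _ _ _
      _ = Pi2 * (P * exp ((s - t) • B)) := by rw [(hPe (s - t)).eq]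
      _ = (Pi2 * P) * exp ((s - t) • B) := (mul_assoc _ _ _).symm
      _ = Pi2 * exp ((s - t) • B) := by rw [h1]
  have hWHb : ∀ t : ℝ, (Pi2 * exp ((s - t) • B)) * (Hl - Hb) =
      ((Pi2 * exp ((s - t) • B)) * (P * Hl)) * (1 - P) := by
    intro t
    set W : E →L[ℂ] E := Pi2 * exp ((s - t) • B) with hWd
    have h1 : W * (P * Hl) = W * Hl := by rw [← mul_assoc, hW t]
    have h2 : W * Hb = (W * Hl) * P := by
      rw [hHbmul, ← mul_assoc, hW t, ← mul_assoc]
    rw [mul_sub, mul_sub, mul_one, h1, h2]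
  have hkey : ∀ t : ℝ, L (exp ((s - t) • B) * ((C - B) * exp (t • C))) =
      (-Complex.I) • (((Pi2 * exp ((s - t) • B)) * (P * Hl)) *
        ((1 - P) * (exp (t • C) * Pi1))) := by
    intro t
    have hCB : C - B = (-Complex.I) • (Hl - Hb) := by
      rw [hCdef, hBdef, smul_sub]
    rw [hL, hCB]
    simp only [smul_mul_assoc, mul_smul_comm]
    congr 1
    calc Pi2 * (exp ((s - t) • B) * ((Hl - Hb) * exp (t • C)) * Pi1)
        = ((Pi2 * exp ((s - t) • B)) * (Hl - Hb)) * (exp (t • C) * Pi1) := by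
          simp only [mul_assoc]
      _ = (((Pi2 * exp ((s - t) • B)) * (P * Hl)) * (1 - P)) * (exp (t • C) * Pi1) := by
          rw [hWHb t]
      _ = ((Pi2 * exp ((s - t) • B)) * (P * Hl)) * ((1 - P) * (exp (t • C) * Pi1)) :=
          mul_assoc _ _ _
  -- pointwise norm bound
  have hbound : ∀ t : ℝ, ‖L (exp ((s - t) • B) * ((C - B) * exp (t • C)))‖ ≤
      J * M * (c * (Real.exp (κ * |t|) - 1)) := by
    intro t
    rw [hkey t]
    rw [norm_smul (α := ℂ) (β := E →L[ℂ] E), norm_neg, Complex.norm_I, one_mul]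
    have h1 : ‖Pi2 * exp ((s - t) • B)‖ ≤ 1 := by
      refine (norm_mul_le _ _).trans ?_
      have := projLE_norm_le H Λ'
      have h2 := norm_exp_le Hb hHbsa (s - t)
      rw [← hBdef] at h2
      calc ‖Pi2‖ * ‖exp ((s - t) • B)‖ ≤ 1 * 1 := by
            exact mul_le_mul this h2 (norm_nonneg _) zero_le_one
        _ = 1 := one_mul 1
    have h2 : ‖P * Hl‖ ≤ J * M := by
      refine (norm_mul_le _ _).trans ?_
      have hP1 := projLE_norm_le H Δ'
      calc ‖P‖ * ‖Hl‖ ≤ 1 * (J * M) :=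
            mul_le_mul hP1 hnorm (norm_nonneg _) zero_le_one
        _ = J * M := one_mul _
    have h3 : ‖(1 - P) * (exp (t • C) * Pi1)‖ ≤ c * (Real.exp (κ * |t|) - 1) := by
      have := hleak t
      rw [huC t] at this
      exact this
    calc ‖((Pi2 * exp ((s - t) • B)) * (P * Hl)) * ((1 - P) * (exp (t • C) * Pi1))‖
        ≤ ‖(Pi2 * exp ((s - t) • B)) * (P * Hl)‖ * ‖(1 - P) * (exp (t • C) * Pi1)‖ :=
          norm_mul_le _ _
      _ ≤ (‖Pi2 * exp ((s - t) • B)‖ * ‖P * Hl‖) * ‖(1 - P) * (exp (t • C) * Pi1)‖ := by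
          refine mul_le_mul_of_nonneg_right ?_ (norm_nonneg _)
          exact norm_mul_le _ _
      _ ≤ (1 * (J * M)) * (c * (Real.exp (κ * |t|) - 1)) := by
          refine mul_le_mul ?_ h3 (norm_nonneg _) (by positivity)
          exact mul_le_mul h1 h2 (norm_nonneg _) zero_le_one
      _ = J * M * (c * (Real.exp (κ * |t|) - 1)) := by rw [one_mul]
  -- integral bound
  have hgcont : Continuous fun t : ℝ => J * M * (c * (Real.exp (κ * |t|) - 1)) :=
    continuous_const.mul (continuous_const.mul
      ((Real.continuous_exp.comp (continuous_const.mul continuous_abs)).sub continuous_const))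
  have hnormint : ‖∫ t in (0:ℝ)..s, L (exp ((s - t) • B) * ((C - B) * exp (t • C)))‖ ≤
      |∫ t in (0:ℝ)..s, J * M * (c * (Real.exp (κ * |t|) - 1))| := by
    apply intervalIntegral.norm_integral_le_abs_of_norm_le
    · exact MeasureTheory.ae_of_all _ fun t => hbound t
    · exact hgcont.intervalIntegrable 0 s
  have hintval : |∫ t in (0:ℝ)..s, J * M * (c * (Real.exp (κ * |t|) - 1))| =
      J * M * (c * ((Real.exp (κ * |s|) - 1) / κ - |s|)) := by
    have h1 : (∫ t in (0:ℝ)..s, J * M * (c * (Real.exp (κ * |t|) - 1))) =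
        (J * M * c) * ∫ t in (0:ℝ)..s, (Real.exp (κ * |t|) - 1) := by
      rw [← intervalIntegral.integral_const_mul]
      congr 1
      ext t
      ring
    rw [h1, abs_mul, abs_of_nonneg (by positivity), abs_integral_exp_abs κ hκ s]
    ring
  -- final arithmetic
  have hval : |s| ≤ (Real.exp (κ * |s|) - 1) / κ := by
    rw [le_div_iff₀ hκ]
    nlinarith [Real.add_one_le_exp (κ * |s|), abs_nonneg s]
  have hfinal : J * M * (c * ((Real.exp (κ * |s|) - 1) / κ - |s|)) ≤
      c * (Real.exp (κ * |s|) - 1 - κ * |s|) := by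
    have hA : 0 ≤ (Real.exp (κ * |s|) - 1) / κ - |s| := by linarith
    have hJMκ : J * M ≤ κ := by
      rw [hκdef]
      nlinarith
    have hXdiv : κ * ((Real.exp (κ * |s|) - 1) / κ) = Real.exp (κ * |s|) - 1 :=
      mul_div_cancel₀ _ (ne_of_gt hκ)
    nlinarith [mul_le_mul_of_nonneg_right hJMκ hA, hc.le,
      mul_le_mul_of_nonneg_left (mul_le_mul_of_nonneg_right hJMκ hA) hc.le]
  rw [hgoal, norm_neg]
  calc ‖∫ t in (0:ℝ)..s, L (exp ((s - t) • B) * ((C - B) * exp (t • C)))‖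
      ≤ |∫ t in (0:ℝ)..s, J * M * (c * (Real.exp (κ * |t|) - 1))| := hnormint
    _ = J * M * (c * ((Real.exp (κ * |s|) - 1) / κ - |s|)) := hintval
    _ ≤ c * (Real.exp (κ * |s|) - 1 - κ * |s|) := hfinal
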